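/- Let f : ℝ^n → ℝ be continuous, M ⊆ ℝ^n, and let K : ℝ^n → Set ℝ^m be a set-valued mapping whose graph gph K = {(z, λ) | λ ∈ K z} is closed. Let z̄ ∈ M ∩ dom K and assume that K is inner semicompact at z̄ with respect to dom K: for every sequence (z_k) in dom K with z_k → z̄ there exist λ_k ∈ K z_k, k ∈ ℕ, such that (λ_k) possesses a bounded subsequence. If for every λ̄ ∈ K z̄ the pair (z̄, λ̄) is a local minimizer of (z, λ) ↦ f z on {(z, λ) | z ∈ M ∧ λ ∈ K z}, then z̄ is a local minimizer of f on M ∩ dom K. -/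
import Mathlib


open Filter Metric Set Bornology
open scoped RealInnerProductSpace Topology Pointwise

noncomputable section

/-- The Bouligand tangent cone to `Ω` at `x`: `w` belongs to it iff there are `t k ↓ 0`
(positive) and `v k → w` with `x + t k • v k ∈ Ω` for all `k`. -/
def bouligandTangentCone {E : Type*} [NormedAddCommGroup E] [NormedSpace ℝ E]
    (Ω : Set E) (x : E) : Set E :=
  {w | ∃ (t : ℕ → ℝ) (v : ℕ → E), (∀ k, 0 < t k) ∧
    Tendsto t atTop (𝓝 0) ∧ Tendsto v atTop (𝓝 w) ∧ ∀ k, x + t k • v k ∈ Ω}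

/-- The regular (Fréchet) normal cone, defined as the polar of the Bouligand tangent cone. -/
def regNormalCone {E : Type*} [NormedAddCommGroup E] [InnerProductSpace ℝ E]
    (Ω : Set E) (x : E) : Set E :=
  {ζ | ∀ w ∈ bouligandTangentCone Ω x, ⟪ζ, w⟫ ≤ 0}

/-- The regular (Fréchet) normal cone for subsets of a product of inner product spaces,
using the natural pairing on the product. -/
def regNormalConeProd {E F : Type*} [NormedAddCommGroup E] [InnerProductSpace ℝ E]
    [NormedAddCommGroup F] [InnerProductSpace ℝ F]
    (Ω : Set (E × F)) (p : E × F) : Set (E × F) :=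
  {ζ | ∀ q ∈ bouligandTangentCone Ω p, ⟪ζ.1, q.1⟫ + ⟪ζ.2, q.2⟫ ≤ 0}

/-- The domain of a set-valued mapping: the points with nonempty image. -/
def svDom {E F : Type*} (K : E → Set F) : Set E := {z | (K z).Nonempty}

/-- The graph of a set-valued mapping. -/
def svGraph {E F : Type*} (K : E → Set F) : Set (E × F) := {p | p.2 ∈ K p.1}

/-- `K` is inner semicompact at `zb` w.r.t. its domain: for every sequence in `dom K`
converging to `zb` there is a selection of images possessing a bounded subsequence. -/
def InnerSemicompactAt {E F : Type*} [TopologicalSpace E] [Bornology F]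
    (K : E → Set F) (zb : E) : Prop :=
  ∀ zs : ℕ → E, (∀ k, zs k ∈ svDom K) → Tendsto zs atTop (𝓝 zb) →
    ∃ ls : ℕ → F, (∀ k, ls k ∈ K (zs k)) ∧
      ∃ φ : ℕ → ℕ, StrictMono φ ∧ IsBounded (Set.range (ls ∘ φ))

/-- `K` is inner calm* in the fuzzy sense at `zb` w.r.t. its domain. -/
def InnerCalmStarFuzzyAt {E F : Type*} [NormedAddCommGroup E] [NormedSpace ℝ E]
    [NormedAddCommGroup F] (K : E → Set F) (zb : E) : Prop :=
  ∀ d ∈ bouligandTangentCone (svDom K) zb, ‖d‖ = 1 →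
    ∃ κ > (0 : ℝ), ∃ lb : F, ∃ (t : ℕ → ℝ) (ds : ℕ → E) (ls : ℕ → F),
      (∀ k, 0 < t k) ∧ Tendsto t atTop (𝓝 0) ∧ Tendsto ds atTop (𝓝 d) ∧
      Tendsto ls atTop (𝓝 lb) ∧
      ∀ k, ls k ∈ K (zb + t k • ds k) ∧ ‖ls k - lb‖ ≤ κ * t k * ‖ds k‖

/-- If `f` is continuous, `gph K` is closed, `K` is inner semicompact at `zb ∈ M ∩ dom K`
w.r.t. `dom K`, and for every `lamb ∈ K zb` the pair `(zb, lamb)` is a local minimizer of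
`(z, λ) ↦ f z` on `{(z, λ) | z ∈ M ∧ λ ∈ K z}`, then `zb` is a local minimizer of `f` on
`M ∩ dom K`. -/
theorem stmt_3 {n m : ℕ} (f : EuclideanSpace ℝ (Fin n) → ℝ)
    (M : Set (EuclideanSpace ℝ (Fin n)))
    (K : EuclideanSpace ℝ (Fin n) → Set (EuclideanSpace ℝ (Fin m)))
    (zb : EuclideanSpace ℝ (Fin n))
    (hf : Continuous f)
    (hgph : IsClosed (svGraph K))
    (hfeas : zb ∈ M ∩ svDom K)
    (hisc : InnerSemicompactAt K zb)
    (hloc : ∀ lamb ∈ K zb, ∃ V ∈ 𝓝 (zb, lamb),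
      ∀ p ∈ V ∩ {p : EuclideanSpace ℝ (Fin n) × EuclideanSpace ℝ (Fin m) |
          p.1 ∈ M ∧ p.2 ∈ K p.1}, f zb ≤ f p.1) :
    ∃ U ∈ 𝓝 zb, ∀ z ∈ U ∩ (M ∩ svDom K), f zb ≤ f z := by
  by_contra hcon
  push_neg at hcon
  -- build a sequence converging to zb violating minimality
  have hseq : ∀ k : ℕ, ∃ z, z ∈ ball zb (1 / (k + 1)) ∩ (M ∩ svDom K) ∧ f z < f zb := by
    intro k
    obtain ⟨z, hz, hfz⟩ := hcon (ball zb (1 / (k + 1)))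
      (ball_mem_nhds _ (by positivity))
    exact ⟨z, hz, hfz⟩
  choose zs hzs hfzs using hseq
  have hdom : ∀ k, zs k ∈ svDom K := fun k => (hzs k).2.2
  have hM : ∀ k, zs k ∈ M := fun k => (hzs k).2.1
  have hdist : ∀ k : ℕ, dist (zs k) zb < 1 / (k + 1) := fun k => (hzs k).1
  have htend : Tendsto zs atTop (𝓝 zb) := by
    rw [tendsto_iff_dist_tendsto_zero]
    refine squeeze_zero (fun k => dist_nonneg) (fun k => (hdist k).le) ?_
    exact tendsto_one_div_add_atTop_nhds_zero_nat
  obtain ⟨ls, hls, φ, hφ, hbdd⟩ := hisc zs hdom htend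
  obtain ⟨lamb, -, ψ, hψ, hlim⟩ := tendsto_subseq_of_bounded hbdd
    (fun k => Set.mem_range_self (f := ls ∘ φ) k)
  have hzlim : Tendsto (fun k => zs (φ (ψ k))) atTop (𝓝 zb) :=
    htend.comp ((hφ.comp hψ).tendsto_atTop)
  have hpair : Tendsto (fun k => (zs (φ (ψ k)), ls (φ (ψ k)))) atTop (𝓝 (zb, lamb)) :=
    hzlim.prodMk_nhds hlim
  have hK : lamb ∈ K zb := by
    have : (zb, lamb) ∈ svGraph K :=
      hgph.mem_of_tendsto hpair (Eventually.of_forall fun k => hls (φ (ψ k)))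
    exact this
  obtain ⟨V, hV, hVmin⟩ := hloc lamb hK
  have hev : ∀ᶠ k in atTop, (zs (φ (ψ k)), ls (φ (ψ k))) ∈ V := hpair.eventually_mem hV
  obtain ⟨k, hk⟩ := hev.exists
  have := hVmin _ ⟨hk, hM (φ (ψ k)), hls (φ (ψ k))⟩
  exact absurd this (not_le.mpr (hfzs (φ (ψ k))))
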